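/- Ramsey-based extension for infinite words: if φ : A⁺ → S is a semigroup morphism onto a finite semigroup S, then every infinite word w ∈ Aᴺ admits a factorization w = u₀u₁u₂⋯ into nonempty finite words such that φ(u₁) = φ(u₂) = ⋯ = e for some idempotent e ∈ S with φ(u₀)·e = φ(u₀). -/

import Mathlib

/-- The factor `w i · w (i+1) ⋯ w (j-1)` of an infinite word `w`, as an
element of the free semigroup (nonempty when `i < j`). -/
def seg {A : Type} (w : ℕ → A) (i j : ℕ) : FreeSemigroup A :=
  (((List.range' (i + 1) (j - i - 1)).map fun t => FreeSemigroup.of (w t)).foldl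
    (· * ·) (FreeSemigroup.of (w i)))

lemma seg_mul {A : Type} (w : ℕ → A) {i j l : ℕ} (hij : i < j) (hjl : j < l) :
    seg w i j * seg w j l = seg w i l := by
  unfold seg
  set f : ℕ → FreeSemigroup A := fun t => FreeSemigroup.of (w t) with hf
  have hr : List.range' (i + 1) (l - i - 1) =
      List.range' (i + 1) (j - i - 1) ++ List.range' j (l - j) := by
    have h1 : (i + 1) + (j - i - 1) = j := by omega
    have h2 : (l - j) + (j - i - 1) = l - i - 1 := by omega
    rw [← h2, Nat.add_comm (l - j), ← (List.range'_append_1 : List.range' (i + 1) (j - i - 1) ++ List.range' (i + 1 + (j - i - 1)) (l - j) = _), h1]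
  have hcons : List.range' j (l - j) = j :: List.range' (j + 1) (l - j - 1) := by
    have : l - j = (l - j - 1) + 1 := by omega
    rw [this, List.range'_succ]
    simp
  haveI : Std.Associative (fun (x y : FreeSemigroup A) => x * y) := ⟨mul_assoc⟩
  rw [hr, List.map_append, List.foldl_append, hcons, List.map_cons, List.foldl_cons]
  exact (List.foldl_assoc (op := (· * ·))).symm

/-- Recursively build a strictly monotone chain satisfying a step relation. -/
lemma chain_aux19 {P : ℕ → Prop} {R : ℕ → ℕ → Prop}
    (h0 : ∃ n, 0 < n ∧ P n)
    (hstep : ∀ n, P n → ∃ m, n < m ∧ P m ∧ R n m) :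
    ∃ k : ℕ → ℕ, StrictMono k ∧ 0 < k 0 ∧ ∀ i, R (k i) (k (i + 1)) := by
  classical
  choose f hf1 hf2 hf3 using hstep
  obtain ⟨n0, hn0, hP0⟩ := h0
  let g : {n // P n} → {n // P n} := fun p => ⟨f p.1 p.2, hf2 p.1 p.2⟩
  let k : ℕ → ℕ := fun i => (g^[i] ⟨n0, hP0⟩).1
  have hk : ∀ i, k (i + 1) = f (k i) ((g^[i] ⟨n0, hP0⟩).2) := by
    intro i
    simp only [k, Function.iterate_succ_apply']
    rfl
  refine ⟨k, strictMono_nat_of_lt_succ fun i => ?_, hn0, fun i => ?_⟩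
  · rw [hk]; exact hf1 _ _
  · rw [hk]; exact hf3 _ _

/-- Ramsey factorization: for a semigroup morphism `φ` from `A⁺` onto a finite
semigroup `S`, every infinite word `w` factors as `u₀u₁u₂⋯` with
`φ(u₁) = φ(u₂) = ⋯ = e` idempotent and `φ(u₀)·e = φ(u₀)`. -/
theorem stmt19 {A S : Type} [Finite A] [Semigroup S] [Finite S]
    (φ : FreeSemigroup A →ₙ* S) (hsurj : Function.Surjective φ)
    (w : ℕ → A) :
    ∃ k : ℕ → ℕ, StrictMono k ∧ 0 < k 0 ∧
      ∃ e : S, e * e = e ∧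
        (∀ i : ℕ, φ (seg w (k i) (k (i + 1))) = e) ∧
        φ (seg w 0 (k 0)) * e = φ (seg w 0 (k 0)) := by
  classical
  set U : Ultrafilter ℕ := Filter.hyperfilter ℕ with hU
  have hcof : ∀ n : ℕ, {j : ℕ | n < j} ∈ U := by
    intro n
    apply Filter.mem_hyperfilter_of_finite_compl
    have hsub : {j : ℕ | n < j}ᶜ ⊆ Set.Iic n := by
      intro x hx
      simp only [Set.mem_compl_iff, Set.mem_setOf_eq, not_lt] at hx
      exact hx
    exact (Set.finite_Iic n).subset hsub
  set c : ℕ → ℕ → S := fun i j => φ (seg w i j) with hc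
  have hcadd : ∀ {i j l : ℕ}, i < j → j < l → c i j * c j l = c i l := by
    intro i j l hij hjl
    simp only [c, ← map_mul, seg_mul w hij hjl]
  have pigeon : ∀ g : ℕ → S, ∃ s : S, {j | g j = s} ∈ U := by
    intro g
    by_contra h
    push_neg at h
    have h2 : ∀ s : S, {j | g j ≠ s} ∈ U := by
      intro s
      exact Ultrafilter.compl_mem_iff_notMem.mpr (h s)
    have h3 : (⋂ s : S, {j | g j ≠ s}) ∈ U := by
      haveI : Finite S := inferInstance
      exact (Filter.iInter_mem).mpr h2
    have hemp : (⋂ s : S, {j | g j ≠ s}) = ∅ := by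
      ext j; simp
    rw [hemp] at h3
    exact U.empty_notMem h3
  choose t ht using fun i => pigeon (c i)
  obtain ⟨e, he⟩ := pigeon t
  -- idempotence of e
  have he2 : e * e = e := by
    obtain ⟨i, hi⟩ := Ultrafilter.nonempty_of_mem he
    have hA : ({j | i < j} ∩ ({j | t j = e} ∩ {j | c i j = t i})) ∈ U :=
      U.inter_mem (hcof i) (U.inter_mem he (ht i))
    obtain ⟨j, hj1, hj2, hj3⟩ := Ultrafilter.nonempty_of_mem hA
    have hB : ({l | j < l} ∩ ({l | c i l = t i} ∩ {l | c j l = t j})) ∈ U :=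
      U.inter_mem (hcof j) (U.inter_mem (ht i) (ht j))
    obtain ⟨l, hl1, hl2, hl3⟩ := Ultrafilter.nonempty_of_mem hB
    have key := hcadd hj1 hl1
    rw [hj3, hl3, hl2] at key
    rw [hi] at key
    rw [hj2] at key
    exact key
  -- chain construction
  have base : ∃ n, 0 < n ∧ t n = e := by
    obtain ⟨n, hn1, hn2⟩ := Ultrafilter.nonempty_of_mem (U.inter_mem (hcof 0) he)
    exact ⟨n, hn1, hn2⟩
  have step : ∀ n, t n = e → ∃ m, n < m ∧ t m = e ∧ (c n m = e ∧ n < m) := by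
    intro n hn
    have hmem : ({j | n < j} ∩ ({j | t j = e} ∩ {j | c n j = t n})) ∈ U :=
      U.inter_mem (hcof n) (U.inter_mem he (ht n))
    obtain ⟨m, hm1, hm2, hm3⟩ := Ultrafilter.nonempty_of_mem hmem
    exact ⟨m, hm1, hm2, by rw [hm3, hn], hm1⟩
  obtain ⟨k, hkmono, hk0, hkR⟩ := chain_aux19 base step
  refine ⟨fun n => k (n + 1), fun a b hab => hkmono (by omega), lt_trans hk0 (hkmono (by omega)), e, he2, fun i => (hkR (i + 1)).1, ?_⟩
  have h01 : k 0 < k 1 := hkmono (by omega)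
  have hpre : c 0 (k 1) = c 0 (k 0) * e := by
    rw [← (hkR 0).1]
    exact (hcadd hk0 h01).symm
  show c 0 (k 1) * e = c 0 (k 1)
  rw [hpre, mul_assoc, he2]
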